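/- Let (Ω, Σ, μ) be a measure space, let (e_n)_{n≥1} be an orthonormal family in L²(μ) of real-valued functions with e_n ∈ L^∞(μ) for every n, let (a_n)_{n≥1} be nonnegative real numbers, let p > 2, and define q by 1/q = 1/2 − 1/p. Then for every real-valued x ∈ L¹(μ) ∩ L²(μ): Σ_{n≥1} a_n² ⟨x, e_n⟩² ≤ ( Σ_{n≥1} a_n^p ‖e_n‖_{L^∞}² )^{2/p} · ‖x‖_{L¹}^{4/p} · ‖x‖_{L²}^{4/q}, where ⟨x, e_n⟩ = ∫_Ω x e_n dμ and the right-hand side may equal +∞. -/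

import Mathlib

open MeasureTheory

/-- if `(e_n)` is an orthonormal family in `L²(μ)` of essentially
bounded functions, `a_n ≥ 0`, `p > 2` and `1/q = 1/2 − 1/p`, then for every
`x ∈ L¹(μ) ∩ L²(μ)`,
`Σ a_n² ⟨x,e_n⟩² ≤ (Σ a_n^p ‖e_n‖_∞²)^{2/p} ‖x‖₁^{4/p} ‖x‖₂^{4/q}`,
where the right-hand side may equal `+∞`. -/
theorem stmt_15 {X : Type*} [MeasurableSpace X] (μ : Measure X)
    (e : ℕ → X → ℝ)
    (he2 : ∀ n, MemLp (e n) 2 μ)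
    (heInf : ∀ n, MemLp (e n) ⊤ μ)
    (hortho : ∀ n k : ℕ, ∫ ω, e n ω * e k ω ∂μ = if n = k then (1 : ℝ) else 0)
    (a : ℕ → ℝ) (ha : ∀ n, 0 ≤ a n)
    (p q : ℝ) (hp : 2 < p) (hq : 1 / q = 1 / 2 - 1 / p)
    (x : X → ℝ) (hx1 : MemLp x 1 μ) (hx2 : MemLp x 2 μ) :
    (∑' n : ℕ, ENNReal.ofReal (a n ^ 2 * (∫ ω, x ω * e n ω ∂μ) ^ 2))
      ≤ (∑' n : ℕ, ENNReal.ofReal (a n ^ p) * (eLpNorm (e n) ⊤ μ) ^ 2) ^ (2 / p)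
          * (eLpNorm x 1 μ) ^ (4 / p) * (eLpNorm x 2 μ) ^ (4 / q) := by
  have hp0 : (0:ℝ) < p := by linarith
  set c : ℕ → ℝ := fun n => ∫ ω, x ω * e n ω ∂μ with hc
  set γ : ℕ → ENNReal := fun n => ENNReal.ofReal |c n| with hγ
  set T : ENNReal := ∑' n : ℕ, ENNReal.ofReal (a n ^ p) * (eLpNorm (e n) ⊤ μ) ^ 2 with hT
  -- Bessel
  set E : ℕ → Lp ℝ 2 μ := fun n => (he2 n).toLp (e n) with hE
  set Y : Lp ℝ 2 μ := hx2.toLp x with hY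
  have hinner : ∀ n, (inner ℝ (E n) Y : ℝ) = c n := by
    intro n
    rw [L2.inner_def]
    rw [integral_congr_ae (by filter_upwards [(he2 n).coeFn_toLp, hx2.coeFn_toLp] with ω h1 h2; rw [h1, h2])]
    simp only [RCLike.inner_apply, starRingEnd_apply, star_trivial, hc]
  have hon : Orthonormal ℝ E := by
    rw [orthonormal_iff_ite]
    intro n k
    rw [L2.inner_def]
    rw [integral_congr_ae (by filter_upwards [(he2 n).coeFn_toLp, (he2 k).coeFn_toLp] with ω h1 h2; rw [h1, h2])]
    simp [RCLike.inner_apply]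
    rw [← hortho n k]
    exact integral_congr_ae (Filter.Eventually.of_forall fun ω => mul_comm _ _)
  have F2 : ∀ s : Finset ℕ, (∑ n ∈ s, γ n ^ 2) ≤ (eLpNorm x 2 μ) ^ 2 := by
    intro s
    have hb := hon.sum_inner_products_le (s := s) Y
    calc ∑ n ∈ s, γ n ^ 2 = ENNReal.ofReal (∑ n ∈ s, ‖(inner ℝ (E n) Y : ℝ)‖ ^ 2) := by
          rw [ENNReal.ofReal_sum_of_nonneg (fun n _ => by positivity)]
          exact Finset.sum_congr rfl fun n _ => by
            rw [hγ, hinner n, ← ENNReal.ofReal_pow (abs_nonneg _), Real.norm_eq_abs]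
      _ ≤ ENNReal.ofReal (‖Y‖ ^ 2) := ENNReal.ofReal_le_ofReal hb
      _ = (eLpNorm x 2 μ) ^ 2 := by
          rw [ENNReal.ofReal_pow (norm_nonneg _), hY, Lp.norm_toLp,
            ENNReal.ofReal_toReal hx2.eLpNorm_ne_top]
  -- pointwise bound
  have F3 : ∀ n, γ n ≤ eLpNorm x 1 μ * eLpNorm (e n) ⊤ μ := by
    intro n
    have hint : Integrable (fun ω => x ω * e n ω) μ := by
      have := (memLp_one_iff_integrable.mp hx1).smul_essSup (β := ℝ)
        (heInf n).aestronglyMeasurable (by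
          have := (heInf n).eLpNorm_ne_top
          rwa [eLpNorm_exponent_top, eLpNormEssSup] at this)
      simpa [smul_eq_mul] using this
    have h1 : γ n ≤ eLpNorm (fun ω => x ω * e n ω) 1 μ := by
      rw [hγ]
      calc ENNReal.ofReal |c n| ≤ ENNReal.ofReal (∫ ω, ‖x ω * e n ω‖ ∂μ) :=
            ENNReal.ofReal_le_ofReal (by rw [← Real.norm_eq_abs]; exact norm_integral_le_integral_norm _)
        _ = eLpNorm (fun ω => x ω * e n ω) 1 μ := by
            rw [MeasureTheory.ofReal_integral_norm_eq_lintegral_enorm hint,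
              eLpNorm_one_eq_lintegral_enorm]
    refine h1.trans ?_
    have := eLpNorm_smul_le_eLpNorm_mul_eLpNorm_top (𝕜 := ℝ) (E := ℝ) 1 (e n) hx1.aestronglyMeasurable
    simpa [smul_eq_mul, Pi.mul_def] using this
  -- exponent facts
  have hpne : p ≠ 0 := hp0.ne'
  have hp2ne : p - 2 ≠ 0 := by linarith
  have h2p : (0:ℝ) ≤ 2 - 4/p := by
    rw [sub_nonneg, div_le_iff₀ hp0]; linarith
  have hpq2 : (p/2).HolderConjugate (p/(p-2)) := by
    rw [Real.holderConjugate_iff_eq_conjExponent (by linarith)]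
    field_simp
  have hterm : ∀ n, ENNReal.ofReal (a n ^ 2 * c n ^ 2)
      = (ENNReal.ofReal (a n) ^ 2 * γ n ^ (4/p)) * γ n ^ (2 - 4/p) := by
    intro n
    have h1 : ENNReal.ofReal (a n ^ 2 * c n ^ 2) = ENNReal.ofReal (a n) ^ 2 * γ n ^ (2:ℕ) := by
      rw [ENNReal.ofReal_mul (by positivity), ENNReal.ofReal_pow (ha n), hγ]
      congr 1
      rw [← ENNReal.ofReal_pow (abs_nonneg _), sq_abs]
    rw [h1, mul_assoc]
    congr 1
    rw [← ENNReal.rpow_natCast (γ n) 2,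
      show (((2:ℕ)):ℝ) = 4/p + (2 - 4/p) by push_cast; ring]
    exact ENNReal.rpow_add_of_nonneg _ _ (by positivity) h2p
  have stepB : ∀ n, (ENNReal.ofReal (a n) ^ 2 * γ n ^ (4/p)) ^ (p/2)
      = ENNReal.ofReal (a n ^ p) * γ n ^ (2:ℕ) := by
    intro n
    rw [ENNReal.mul_rpow_of_nonneg _ _ (by positivity)]
    congr 1
    · rw [← ENNReal.rpow_natCast (ENNReal.ofReal (a n)) 2, ← ENNReal.rpow_mul,
        show (((2:ℕ)):ℝ) * (p/2) = p by push_cast; ring,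
        ENNReal.ofReal_rpow_of_nonneg (ha n) hp0.le]
    · rw [← ENNReal.rpow_mul,
        show (4/p) * (p/2) = (((2:ℕ)):ℝ) by push_cast; field_simp; norm_num,
        ENNReal.rpow_natCast]
  have stepC : ∀ n, (γ n ^ (2 - 4/p)) ^ (p/(p-2)) = γ n ^ (2:ℕ) := by
    intro n
    rw [← ENNReal.rpow_mul,
      show (2 - 4/p) * (p/(p-2)) = (((2:ℕ)):ℝ) by push_cast; field_simp; ring,
      ENNReal.rpow_natCast]
  rw [ENNReal.tsum_eq_iSup_sum]
  refine iSup_le fun s => ?_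
  calc ∑ n ∈ s, ENNReal.ofReal (a n ^ 2 * c n ^ 2)
      = ∑ n ∈ s, (ENNReal.ofReal (a n) ^ 2 * γ n ^ (4/p)) * γ n ^ (2 - 4/p) :=
        Finset.sum_congr rfl fun n _ => hterm n
    _ ≤ (∑ n ∈ s, (ENNReal.ofReal (a n) ^ 2 * γ n ^ (4/p)) ^ (p/2)) ^ (1/(p/2))
          * (∑ n ∈ s, (γ n ^ (2 - 4/p)) ^ (p/(p-2))) ^ (1/(p/(p-2))) :=
        ENNReal.inner_le_Lp_mul_Lq s _ _ hpq2
    _ = (∑ n ∈ s, ENNReal.ofReal (a n ^ p) * γ n ^ (2:ℕ)) ^ (2/p)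
          * (∑ n ∈ s, γ n ^ (2:ℕ)) ^ ((p-2)/p) := by
        rw [Finset.sum_congr rfl fun n _ => stepB n, Finset.sum_congr rfl fun n _ => stepC n,
          one_div_div, one_div_div]
    _ ≤ ((eLpNorm x 1 μ) ^ 2 * T) ^ (2/p) * ((eLpNorm x 2 μ) ^ 2) ^ ((p-2)/p) := by
        refine mul_le_mul' (ENNReal.rpow_le_rpow ?_ (by positivity))
          (ENNReal.rpow_le_rpow (F2 s) (div_nonneg (by linarith) hp0.le))
        calc ∑ n ∈ s, ENNReal.ofReal (a n ^ p) * γ n ^ (2:ℕ)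
            ≤ ∑ n ∈ s, ENNReal.ofReal (a n ^ p)
                * ((eLpNorm x 1 μ) ^ 2 * (eLpNorm (e n) ⊤ μ) ^ 2) := by
              refine Finset.sum_le_sum fun n _ => mul_le_mul_right ?_ _
              rw [← mul_pow]
              exact pow_le_pow_left₀ (by positivity) (F3 n) 2
          _ = (eLpNorm x 1 μ) ^ 2
                * ∑ n ∈ s, ENNReal.ofReal (a n ^ p) * (eLpNorm (e n) ⊤ μ) ^ 2 := by
              rw [Finset.mul_sum]
              exact Finset.sum_congr rfl fun n _ => by ring
          _ ≤ (eLpNorm x 1 μ) ^ 2 * T := mul_le_mul_right (ENNReal.sum_le_tsum s) _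
    _ = T ^ (2/p) * (eLpNorm x 1 μ) ^ (4/p) * (eLpNorm x 2 μ) ^ (4/q) := by
        have h4q : (4:ℝ)/q = (((2:ℕ)):ℝ) * ((p-2)/p) := by
          rw [div_eq_mul_one_div 4 q, hq]
          push_cast
          field_simp
          ring
        rw [ENNReal.mul_rpow_of_nonneg _ _ (by positivity),
          ← ENNReal.rpow_natCast (eLpNorm x 1 μ) 2, ← ENNReal.rpow_mul,
          show (((2:ℕ)):ℝ) * (2/p) = 4/p by push_cast; ring,
          ← ENNReal.rpow_natCast (eLpNorm x 2 μ) 2, ← ENNReal.rpow_mul, ← h4q]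
        ring
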